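/- For every α ∈ [1, 3.67], the function λ ↦ h_α(λ²)/λ is concave on the interval (0, 1/√2]. -/

import Mathlib

open Finset

/-- The α-logarithm: `ln_α(ξ) = (ξ^(1-α) - 1)/(1-α)` for `α ≠ 1`, and `ln ξ` for `α = 1`. -/
noncomputable def alphaLog (α ξ : ℝ) : ℝ :=
  if α = 1 then Real.log ξ else (ξ ^ (1 - α) - 1) / (1 - α)

/-- The Tsallis–Havrda–Charvát entropy of order `α` of a pmf `p` on a finite set. -/
noncomputable def thc (α : ℝ) {S : Type*} [Fintype S] (p : S → ℝ) : ℝ :=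
  if α = 1 then -∑ s, p s * Real.log (p s)
  else ((∑ s, p s ^ α) - 1) / (1 - α)

/-- The binary THC entropy `h_α(q)`. -/
noncomputable def binThc (α q : ℝ) : ℝ :=
  if α = 1 then -(q * Real.log q) - (1 - q) * Real.log (1 - q)
  else (q ^ α + (1 - q) ^ α - 1) / (1 - α)

/-- First conditional THC entropy (Daróczy form): `H_α(X|Y) = Σ_y p(y)^α H_α(X|y)`,
where `p` is the joint pmf of `(X, Y)`.  (Terms with `p(y) = 0` vanish for `α > 0`.) -/
noncomputable def condThc1 (α : ℝ) {SX SY : Type*} [Fintype SX] [Fintype SY]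
    (p : SX × SY → ℝ) : ℝ :=
  ∑ y, (∑ x, p (x, y)) ^ α * thc α (fun x => p (x, y) / ∑ x', p (x', y))

/-- Second conditional THC entropy: `H̃_α(X|Y) = Σ_y p(y) H_α(X|y)`,
where `p` is the joint pmf of `(X, Y)`.  (Terms with `p(y) = 0` vanish.) -/
noncomputable def condThc2 (α : ℝ) {SX SY : Type*} [Fintype SX] [Fintype SY]
    (p : SX × SY → ℝ) : ℝ :=
  ∑ y, (∑ x, p (x, y)) * thc α (fun x => p (x, y) / ∑ x', p (x', y))

/-- The pmf of a random variable `X` defined on a finite sample space with pmf `μ`. -/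
noncomputable def distOf {Ω S : Type*} [Fintype Ω] [DecidableEq S]
    (μ : Ω → ℝ) (X : Ω → S) : S → ℝ :=
  fun s => ∑ ω ∈ Finset.univ.filter (fun ω => X ω = s), μ ω


open Set


lemma key_rpow_bound {α : ℝ} (h1 : 1 ≤ α) (h2 : α ≤ 3.67) {t : ℝ} (ht0 : 0 ≤ t) (ht1 : t ≤ 1) :
    (1 + t) ^ α ≤ 1 + α * t + 2 * α * (α - 1) * t ^ 2 := by
  -- base positivity helpers
  have hbound : ∀ s : ℝ, 0 ≤ s → s ≤ 1 → (1 + s) ^ (α - 2) ≤ 4 := by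
    intro s hs0 hs1
    rcases le_or_gt α 2 with hle | hgt
    · have : (1 + s) ^ (α - 2) ≤ 1 :=
        Real.rpow_le_one_of_one_le_of_nonpos (by linarith) (by linarith)
      linarith
    · have h24 : (2:ℝ) ^ (2:ℝ) = 4 := by
        rw [show (2:ℝ) = ((2:ℕ):ℝ) by norm_num, Real.rpow_natCast]; norm_num
      have hb : (1 + s) ^ (α - 2) ≤ (2:ℝ) ^ (α - 2) :=
        Real.rpow_le_rpow (by linarith) (by linarith) (by linarith)
      have hc : (2:ℝ) ^ (α - 2) ≤ (2:ℝ) ^ (2:ℝ) :=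
        Real.rpow_le_rpow_of_exponent_le one_le_two (by norm_num at h2 ⊢; linarith)
      linarith
  -- the derivative function k = h'
  set k : ℝ → ℝ := fun s => α + 4 * α * (α - 1) * s - α * (1 + s) ^ (α - 1) with hk
  have hkd : ∀ s : ℝ, 0 ≤ s → HasDerivAt k (4 * α * (α - 1) - α * ((α - 1) * (1 + s) ^ (α - 2))) s := by
    intro s hs0
    have hbase : HasDerivAt (fun x : ℝ => 1 + x) 1 s := (hasDerivAt_id s).const_add 1
    have hr : HasDerivAt (fun x : ℝ => (1 + x) ^ (α - 1)) (1 * (α - 1) * (1 + s) ^ (α - 1 - 1)) s :=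
      hbase.rpow_const (Or.inl (by positivity))
    have := ((hasDerivAt_id s).const_mul (4 * α * (α - 1))).const_add α |>.sub (hr.const_mul α)
    refine this.congr_deriv ?_
    ring_nf
  have hhd : ∀ s : ℝ, 0 ≤ s → HasDerivAt (fun x : ℝ => 1 + α * x + 2 * α * (α - 1) * x ^ 2 - (1 + x) ^ α) (k s) s := by
    intro s hs0
    have hbase : HasDerivAt (fun x : ℝ => 1 + x) 1 s := (hasDerivAt_id s).const_add 1
    have hr : HasDerivAt (fun x : ℝ => (1 + x) ^ α) (1 * α * (1 + s) ^ (α - 1)) s :=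
      hbase.rpow_const (Or.inl (by positivity))
    have hpoly : HasDerivAt (fun x : ℝ => 1 + α * x + 2 * α * (α - 1) * x ^ 2)
        (α + 2 * α * (α - 1) * (2 * s)) s := by
      have h1' : HasDerivAt (fun x : ℝ => α * x) α s := by
        simpa using (hasDerivAt_id s).const_mul α
      have h2' : HasDerivAt (fun x : ℝ => x ^ 2) (2 * s) s := by
        simpa using hasDerivAt_pow 2 s
      exact (h1'.const_add 1).add (h2'.const_mul (2 * α * (α - 1)))
    have := hpoly.sub hr
    refine this.congr_deriv ?_
    simp only [hk]; ring
  -- k is monotone on [0,1] and k 0 = 0, so k ≥ 0 on [0,1]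
  have hαα : 0 ≤ α * (α - 1) := by nlinarith
  have hkmono : MonotoneOn k (Icc 0 1) := by
    apply monotoneOn_of_deriv_nonneg (convex_Icc 0 1)
    · intro x hx
      exact ((hkd x hx.1).differentiableAt).continuousAt.continuousWithinAt
    · intro x hx
      rw [interior_Icc] at hx
      exact ((hkd x hx.1.le).differentiableAt).differentiableWithinAt
    · intro x hx
      rw [interior_Icc] at hx
      rw [(hkd x hx.1.le).deriv]
      have := hbound x hx.1.le hx.2.le
      nlinarith
  have hk0 : k 0 = 0 := by simp [hk, Real.one_rpow]
  have hknn : ∀ s ∈ Icc (0:ℝ) 1, 0 ≤ k s := by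
    intro s hs
    have := hkmono (left_mem_Icc.mpr zero_le_one) hs hs.1
    rwa [hk0] at this
  -- h is monotone on [0,1] and h 0 = 0
  have hhmono : MonotoneOn (fun x : ℝ => 1 + α * x + 2 * α * (α - 1) * x ^ 2 - (1 + x) ^ α) (Icc 0 1) := by
    apply monotoneOn_of_deriv_nonneg (convex_Icc 0 1)
    · intro x hx
      exact ((hhd x hx.1).differentiableAt).continuousAt.continuousWithinAt
    · intro x hx
      rw [interior_Icc] at hx
      exact ((hhd x hx.1.le).differentiableAt).differentiableWithinAt
    · intro x hx
      rw [interior_Icc] at hx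
      rw [(hhd x hx.1.le).deriv]
      exact hknn x ⟨hx.1.le, hx.2.le⟩
  have := hhmono (left_mem_Icc.mpr zero_le_one) ⟨ht0, ht1⟩ ht0
  simp only [Real.one_rpow] at this
  norm_num at this
  nlinarith [this]



lemma sq_le_half {l : ℝ} (h0 : 0 < l) (h1 : l ≤ 1 / Real.sqrt 2) : l ^ 2 ≤ 1 / 2 := by
  have hs : (0:ℝ) < Real.sqrt 2 := Real.sqrt_pos.mpr (by norm_num)
  have : l ^ 2 ≤ (1 / Real.sqrt 2) ^ 2 := by
    apply pow_le_pow_left₀ h0.le h1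
  rwa [div_pow, one_pow, Real.sq_sqrt (by norm_num : (0:ℝ) ≤ 2)] at this

lemma convexOn_g {α : ℝ} (h1 : 1 ≤ α) (h2 : α ≤ 3.67) :
    ConvexOn ℝ (Ioc 0 (1 / Real.sqrt 2)) (fun l : ℝ => ((1 - l ^ 2) ^ α - 1) / l) := by
  set c : ℝ := 1 / Real.sqrt 2 with hc
  set g : ℝ → ℝ := fun l => ((1 - l ^ 2) ^ α - 1) / l with hgdef
  set G1 : ℝ → ℝ := fun x => -(2*α) * (1 - x^2)^(α-1) + (1 - (1 - x^2)^α) / x^2 with hG1def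
  -- first derivative
  have hgd : ∀ x : ℝ, 0 < x → x^2 < 1 → HasDerivAt g (G1 x) x := by
    intro x hx hx2
    have hu : (0:ℝ) < 1 - x^2 := by linarith
    have hbase : HasDerivAt (fun l : ℝ => 1 - l^2) (-(2*x)) x := by
      simpa using ((hasDerivAt_pow 2 x).const_sub 1)
    have hN : HasDerivAt (fun l : ℝ => (1 - l^2) ^ α - 1)
        ((-(2*x)) * α * (1 - x^2) ^ (α-1)) x :=
      (hbase.rpow_const (Or.inl hu.ne')).sub_const 1
    have hdiv := hN.div (hasDerivAt_id x) hx.ne'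
    refine hdiv.congr_deriv ?_
    simp only [hG1def, id]
    field_simp
    ring
  -- second derivative
  have hG1d : ∀ x : ℝ, 0 < x → x^2 < 1 → HasDerivAt G1
      (-(2*α) * ((-(2*x)) * (α-1) * (1 - x^2)^(α-2))
        + (((2*x) * α * (1 - x^2)^(α-1)) * x^2 - (1 - (1 - x^2)^α) * (2*x)) / (x^2)^2) x := by
    intro x hx hx2
    have hu : (0:ℝ) < 1 - x^2 := by linarith
    have hbase : HasDerivAt (fun l : ℝ => 1 - l^2) (-(2*x)) x := by
      simpa using ((hasDerivAt_pow 2 x).const_sub 1)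
    have hp1 : HasDerivAt (fun l : ℝ => -(2*α) * (1 - l^2)^(α-1))
        (-(2*α) * ((-(2*x)) * (α-1) * (1 - x^2)^(α-2))) x := by
      have := (hbase.rpow_const (Or.inl hu.ne' : (1 - x^2) ≠ 0 ∨ 1 ≤ α - 1)).const_mul (-(2*α))
      rw [show α - 2 = α - 1 - 1 by ring]
      exact this
    have hnum : HasDerivAt (fun l : ℝ => 1 - (1 - l^2)^α) ((2*x) * α * (1 - x^2)^(α-1)) x := by
      have := (hbase.rpow_const (Or.inl hu.ne' : (1 - x^2) ≠ 0 ∨ 1 ≤ α)).const_sub 1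
      refine this.congr_deriv ?_
      ring
    have hden : HasDerivAt (fun l : ℝ => l^2) (2*x) x := by simpa using hasDerivAt_pow 2 x
    have hp2 := hnum.div hden (by positivity : x^2 ≠ 0)
    exact hp1.add hp2
  -- nonnegativity of the second derivative
  have hG2nn : ∀ x : ℝ, 0 < x → x^2 ≤ 1/2 →
      0 ≤ -(2*α) * ((-(2*x)) * (α-1) * (1 - x^2)^(α-2))
        + (((2*x) * α * (1 - x^2)^(α-1)) * x^2 - (1 - (1 - x^2)^α) * (2*x)) / (x^2)^2 := by
    intro x hx hx2
    set u : ℝ := 1 - x^2 with hu'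
    have hu : (0:ℝ) < u := by rw [hu']; linarith
    have hA : (0:ℝ) < u ^ (α-2) := Real.rpow_pos_of_pos hu _
    have hB : u ^ (α-1) = u ^ (α-2) * u := by
      have h := Real.rpow_add_one hu.ne' (α-2)
      rw [show α - 2 + 1 = α - 1 by ring] at h
      exact h
    have hC : u ^ α = u ^ (α-1) * u := by
      have h := Real.rpow_add_one hu.ne' (α-1)
      rw [show α - 1 + 1 = α by ring] at h
      exact h
    -- key inequality with t = x^2/u
    have ht0 : 0 ≤ x^2 / u := by positivity
    have ht1 : x^2 / u ≤ 1 := by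
      rw [div_le_one hu, hu']; linarith
    have hkey := key_rpow_bound h1 h2 ht0 ht1
    have h1t : 1 + x^2/u = u⁻¹ := by
      field_simp
      rw [hu']; ring
    rw [h1t, Real.inv_rpow hu.le] at hkey
    have hCpos : (0:ℝ) < u ^ α := Real.rpow_pos_of_pos hu _
    have hstar : 1 ≤ u^α + α * x^2 * u^(α-1) + 2*α*(α-1)*x^4*u^(α-2) := by
      have := mul_le_mul_of_nonneg_left hkey hCpos.le
      rw [mul_inv_cancel₀ hCpos.ne'] at this
      calc (1:ℝ) ≤ u ^ α * (1 + α * (x^2/u) + 2*α*(α-1)*(x^2/u)^2) := this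
        _ = u^α + α * x^2 * u^(α-1) + 2*α*(α-1)*x^4*u^(α-2) := by
            rw [hC, hB]; field_simp
    have hform : -(2*α) * ((-(2*x)) * (α-1) * u^(α-2))
        + (((2*x) * α * u^(α-1)) * x^2 - (1 - u^α) * (2*x)) / (x^2)^2
        = 2 * (2*α*(α-1)*x^4*(u^(α-2)) + α*x^2*(u^(α-1)) + (u^α - 1)) / x^3 := by
      field_simp
      ring
    rw [hform]
    apply div_nonneg _ (by positivity)
    nlinarith [hstar]
  -- assemble
  have hmem : ∀ x : ℝ, x ∈ Ioc (0:ℝ) c → 0 < x ∧ x^2 < 1 := by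
    intro x hx
    exact ⟨hx.1, lt_of_le_of_lt (sq_le_half hx.1 hx.2) (by norm_num)⟩
  apply convexOn_of_deriv2_nonneg (convex_Ioc 0 c)
  · intro x hx
    obtain ⟨h0, h1'⟩ := hmem x hx
    exact ((hgd x h0 h1').differentiableAt).continuousAt.continuousWithinAt
  · rw [interior_Ioc]
    intro x hx
    obtain ⟨h0, h1'⟩ := hmem x (Ioo_subset_Ioc_self hx)
    exact ((hgd x h0 h1').differentiableAt).differentiableWithinAt
  · rw [interior_Ioc]
    intro x hx
    obtain ⟨h0, h1'⟩ := hmem x (Ioo_subset_Ioc_self hx)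
    have hev : deriv g =ᶠ[nhds x] G1 := by
      filter_upwards [isOpen_Ioo.mem_nhds hx] with y hy
      obtain ⟨h0', h1''⟩ := hmem y (Ioo_subset_Ioc_self hy)
      exact (hgd y h0' h1'').deriv
    have : HasDerivAt (deriv g) _ x := (hG1d x h0 h1').congr_of_eventuallyEq hev
    exact this.differentiableAt.differentiableWithinAt
  · rw [interior_Ioc]
    intro x hx
    obtain ⟨h0, h1'⟩ := hmem x (Ioo_subset_Ioc_self hx)
    have hev : deriv g =ᶠ[nhds x] G1 := by
      filter_upwards [isOpen_Ioo.mem_nhds hx] with y hy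
      obtain ⟨h0', h1''⟩ := hmem y (Ioo_subset_Ioc_self hy)
      exact (hgd y h0' h1'').deriv
    have hd2 : HasDerivAt (deriv g) _ x := (hG1d x h0 h1').congr_of_eventuallyEq hev
    have : deriv^[2] g x = deriv (deriv g) x := rfl
    rw [this, hd2.deriv]
    exact hG2nn x h0 (sq_le_half h0 hx.2.le)



lemma concaveOn_congr_aux {s : Set ℝ} {f g : ℝ → ℝ} (hf : ConcaveOn ℝ s f)
    (h : ∀ x ∈ s, f x = g x) : ConcaveOn ℝ s g := by
  refine ⟨hf.1, fun x hx y hy a b ha hb hab => ?_⟩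
  rw [← h x hx, ← h y hy, ← h _ (hf.1 hx hy ha hb hab)]
  exact hf.2 hx hy ha hb hab

lemma concaveOn_g1 :
    ConcaveOn ℝ (Ioc 0 (1 / Real.sqrt 2)) (fun l : ℝ => -((1 - l ^ 2) * Real.log (1 - l ^ 2)) / l) := by
  set c : ℝ := 1 / Real.sqrt 2 with hc
  set g : ℝ → ℝ := fun l => -((1 - l ^ 2) * Real.log (1 - l ^ 2)) / l with hgdef
  set G1 : ℝ → ℝ := fun x => 2 * (Real.log (1 - x^2) + 1) + (1 - x^2) * Real.log (1 - x^2) / x^2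
    with hG1def
  have hgd : ∀ x : ℝ, 0 < x → x^2 < 1 → HasDerivAt g (G1 x) x := by
    intro x hx hx2
    have hu : (0:ℝ) < 1 - x^2 := by linarith
    have hbase : HasDerivAt (fun l : ℝ => 1 - l^2) (-(2*x)) x := by
      simpa using ((hasDerivAt_pow 2 x).const_sub 1)
    have hlog : HasDerivAt (fun l : ℝ => Real.log (1 - l^2)) ((-(2*x)) / (1 - x^2)) x :=
      hbase.log hu.ne'
    have hN : HasDerivAt (fun l : ℝ => -((1 - l^2) * Real.log (1 - l^2)))
        (-((-(2*x)) * Real.log (1 - x^2) + (1 - x^2) * ((-(2*x)) / (1 - x^2)))) x :=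
      (hbase.mul hlog).neg
    have hdiv := hN.div (hasDerivAt_id x) hx.ne'
    refine hdiv.congr_deriv ?_
    simp only [hG1def, id]
    field_simp
    ring
  have hG1d : ∀ x : ℝ, 0 < x → x^2 < 1 → HasDerivAt G1
      (2 * ((-(2*x)) / (1 - x^2))
        + (((-(2*x)) * Real.log (1 - x^2) + (-(2*x))) * x^2
            - (1 - x^2) * Real.log (1 - x^2) * (2*x)) / (x^2)^2) x := by
    intro x hx hx2
    have hu : (0:ℝ) < 1 - x^2 := by linarith
    have hbase : HasDerivAt (fun l : ℝ => 1 - l^2) (-(2*x)) x := by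
      simpa using ((hasDerivAt_pow 2 x).const_sub 1)
    have hlog : HasDerivAt (fun l : ℝ => Real.log (1 - l^2)) ((-(2*x)) / (1 - x^2)) x :=
      hbase.log hu.ne'
    have hp1 : HasDerivAt (fun l : ℝ => 2 * (Real.log (1 - l^2) + 1))
        (2 * ((-(2*x)) / (1 - x^2))) x := by
      simpa using ((hlog.add_const 1).const_mul 2)
    have hnum : HasDerivAt (fun l : ℝ => (1 - l^2) * Real.log (1 - l^2))
        ((-(2*x)) * Real.log (1 - x^2) + (-(2*x))) x := by
      have := hbase.mul hlog
      refine this.congr_deriv ?_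
      field_simp
    have hden : HasDerivAt (fun l : ℝ => l^2) (2*x) x := by simpa using hasDerivAt_pow 2 x
    exact hp1.add (hnum.div hden (by positivity))
  have hG2np : ∀ x : ℝ, 0 < x → x^2 ≤ 1/2 →
      2 * ((-(2*x)) / (1 - x^2))
        + (((-(2*x)) * Real.log (1 - x^2) + (-(2*x))) * x^2
            - (1 - x^2) * Real.log (1 - x^2) * (2*x)) / (x^2)^2 ≤ 0 := by
    intro x hx hx2
    set u : ℝ := 1 - x^2 with hu'
    set L : ℝ := Real.log u with hL'
    have hu : (0:ℝ) < u := by rw [hu']; linarith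
    have hu2 : (1:ℝ)/2 ≤ u := by rw [hu']; linarith
    have hu1 : u ≤ 1 := by rw [hu']; nlinarith
    have hL : 1 - u⁻¹ ≤ L := Real.one_sub_inv_le_log_of_pos hu
    have hL2 : u - 1 ≤ u * L := by
      have := mul_le_mul_of_nonneg_left hL hu.le
      rw [mul_sub, mul_inv_cancel₀ hu.ne', mul_one] at this
      linarith
    have hx2u : x^2 = 1 - u := by rw [hu']; ring
    -- inner expression nonneg
    have h10 : 0 ≤ u * (2*(1-u)^2 + (1-u) + L) := by nlinarith [hL2]
    have hG : 0 ≤ 2*(1-u)^2 + (1-u) + L := nonneg_of_mul_nonneg_right h10 hu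
    have hdiv : 2*x^4 ≤ 2*x^4/u := by
      rw [le_div_iff₀ hu]
      nlinarith [pow_nonneg hx.le 4]
    have hinner : 0 ≤ 2*x^4/u + x^2*(L+1) + u*L := by nlinarith [hdiv, hG]
    have hform : 2 * ((-(2*x)) / u)
        + (((-(2*x)) * L + (-(2*x))) * x^2 - u * L * (2*x)) / (x^2)^2
        = -(2 * (2*x^4/u + x^2*(L+1) + u*L)) / x^3 := by
      field_simp
      ring
    rw [hform]
    apply div_nonpos_of_nonpos_of_nonneg _ (by positivity)
    linarith
  -- assemble
  have hmem : ∀ x : ℝ, x ∈ Ioc (0:ℝ) c → 0 < x ∧ x^2 < 1 := by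
    intro x hx
    exact ⟨hx.1, lt_of_le_of_lt (sq_le_half hx.1 hx.2) (by norm_num)⟩
  apply concaveOn_of_deriv2_nonpos (convex_Ioc 0 c)
  · intro x hx
    obtain ⟨h0, h1'⟩ := hmem x hx
    exact ((hgd x h0 h1').differentiableAt).continuousAt.continuousWithinAt
  · rw [interior_Ioc]
    intro x hx
    obtain ⟨h0, h1'⟩ := hmem x (Ioo_subset_Ioc_self hx)
    exact ((hgd x h0 h1').differentiableAt).differentiableWithinAt
  · rw [interior_Ioc]
    intro x hx
    obtain ⟨h0, h1'⟩ := hmem x (Ioo_subset_Ioc_self hx)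
    have hev : deriv g =ᶠ[nhds x] G1 := by
      filter_upwards [isOpen_Ioo.mem_nhds hx] with y hy
      obtain ⟨h0', h1''⟩ := hmem y (Ioo_subset_Ioc_self hy)
      exact (hgd y h0' h1'').deriv
    have : HasDerivAt (deriv g) _ x := (hG1d x h0 h1').congr_of_eventuallyEq hev
    exact this.differentiableAt.differentiableWithinAt
  · rw [interior_Ioc]
    intro x hx
    obtain ⟨h0, h1'⟩ := hmem x (Ioo_subset_Ioc_self hx)
    have hev : deriv g =ᶠ[nhds x] G1 := by
      filter_upwards [isOpen_Ioo.mem_nhds hx] with y hy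
      obtain ⟨h0', h1''⟩ := hmem y (Ioo_subset_Ioc_self hy)
      exact (hgd y h0' h1'').deriv
    have hd2 : HasDerivAt (deriv g) _ x := (hG1d x h0 h1').congr_of_eventuallyEq hev
    have hiter : deriv^[2] g x = deriv (deriv g) x := rfl
    rw [hiter, hd2.deriv]
    exact hG2np x h0 (sq_le_half h0 hx.2.le)

/-- For every `α ∈ [1, 3.67]`, the function `λ ↦ h_α(λ²)/λ` is concave on
the interval `(0, 1/√2]`. -/
theorem binThc_sq_div_concaveOn (α : ℝ) (hα : α ∈ Set.Icc (1 : ℝ) 3.67) :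
    ConcaveOn ℝ (Set.Ioc 0 (1 / Real.sqrt 2)) (fun lam : ℝ => binThc α (lam ^ 2) / lam) := by
  obtain ⟨hα1, hα2⟩ := hα
  rcases eq_or_lt_of_le hα1 with heq | hgt
  · -- case α = 1
    subst heq
    have p1 : ConcaveOn ℝ (Set.Ioc 0 (1 / Real.sqrt 2)) (fun l : ℝ => -(2 * l * Real.log l)) := by
      have h : ConcaveOn ℝ (Set.Ioc (0:ℝ) (1 / Real.sqrt 2))
          (fun x : ℝ => (2:ℝ) • -(x * Real.log x)) :=
        ((Real.convexOn_mul_log).neg.smul (by norm_num : (0:ℝ) ≤ 2)).subset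
          (fun x hx => le_of_lt hx.1) (convex_Ioc _ _)
      apply concaveOn_congr_aux h
      intro x hx
      simp only [smul_eq_mul]
      ring
    have hsum := p1.add concaveOn_g1
    apply concaveOn_congr_aux hsum
    intro x hx
    have hx0 : (0:ℝ) < x := hx.1
    simp only [binThc, if_pos rfl]
    rw [Real.log_pow]
    push_cast
    simp only [Pi.add_apply, Pi.neg_apply]
    field_simp
    ring
  · -- case α > 1
    have hne : α ≠ 1 := ne_of_gt hgt
    have P : ConvexOn ℝ (Set.Ioc (0:ℝ) (1 / Real.sqrt 2)) (fun l : ℝ => l ^ (2 * α - 1)) :=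
      (convexOn_rpow (by linarith)).subset (fun x hx => le_of_lt hx.1) (convex_Ioc _ _)
    have hsum := P.add (convexOn_g hα1 hα2)
    have hcc := (hsum.neg).smul (inv_nonneg.mpr (by linarith : (0:ℝ) ≤ α - 1))
    apply concaveOn_congr_aux hcc
    intro x hx
    have hx0 : (0:ℝ) < x := hx.1
    have e1 : ((x:ℝ) ^ 2) ^ α = x ^ ((2:ℝ) * α) := by
      rw [← Real.rpow_natCast x 2, ← Real.rpow_mul hx0.le]
      norm_num
    have e2 : x ^ ((2:ℝ) * α) = x ^ (2 * α - 1) * x := by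
      have h := Real.rpow_add_one hx0.ne' (2 * α - 1)
      rw [show 2 * α - 1 + 1 = 2 * α by ring] at h
      exact h
    simp only [binThc, if_neg hne, smul_eq_mul]
    rw [e1, e2]
    have h1α : (1:ℝ) - α ≠ 0 := sub_ne_zero.mpr (Ne.symm hne)
    have hα1' : (α:ℝ) - 1 ≠ 0 := sub_ne_zero.mpr hne
    simp only [Pi.add_apply, Pi.neg_apply]
    field_simp
    ring
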